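/- For any function f : S → ℝ and any policy π, J(π) = E_{s∼μ}[f(s)] + (1/(1-γ)) E_{s∼d^π, a∼π(·|s), s'∼P(·|s,a)}[R(s,a,s') + γ f(s') - f(s)]. -/
import Mathlib


open BigOperators Finset Matrix

noncomputable section

variable {S A : Type*}

/-- Policy transition matrix (column-stochastic): entry `(s', s)` is
`P_pol(s'|s) = ∑ a, P(s'|s,a) pol(a|s)`. -/
def Pmat [Fintype A] (P : S → A → S → ℝ) (pol : S → A → ℝ) : Matrix S S ℝ :=
  fun s' s => ∑ a, P s a s' * pol s a

/-- Discounted future state distribution `d^π = (1-γ) ∑_t γ^t P_π^t μ`. -/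
def dFut [Fintype S] [DecidableEq S] [Fintype A] (γ : ℝ) (P : S → A → S → ℝ)
    (μ : S → ℝ) (pol : S → A → ℝ) : S → ℝ :=
  fun s => (1 - γ) * ∑' t : ℕ, γ ^ t * ((Pmat P pol ^ t) *ᵥ μ) s

/-- Discounted return `J(π)` (also used as the cost return `J_C(π)` with a cost `C`
in place of the reward `R`). -/
def Jret [Fintype S] [DecidableEq S] [Fintype A] (γ : ℝ) (P : S → A → S → ℝ)
    (R : S → A → S → ℝ) (μ : S → ℝ) (pol : S → A → ℝ) : ℝ :=
  (1 / (1 - γ)) * ∑ s, dFut γ P μ pol s * (∑ a, pol s a * (∑ s', P s a s' * R s a s'))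

/-- Total variational divergence between action distributions at state `s`. -/
def DTV [Fintype A] (pol' pol : S → A → ℝ) (s : S) : ℝ :=
  (1 / 2) * ∑ a, |pol' s a - pol s a|

/-- Kullback–Leibler divergence between action distributions at state `s`. -/
def DKL [Fintype A] (pol' pol : S → A → ℝ) (s : S) : ℝ :=
  ∑ a, pol' s a * Real.log (pol' s a / pol s a)

/-- Advantage function `A^π(s,a) = Q^π(s,a) - V^π(s)` built from a value function `V`
(also used for cost advantages with a cost `C` in place of `R`). -/
def Adv [Fintype S] (γ : ℝ) (P : S → A → S → ℝ) (R : S → A → S → ℝ)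
    (V : S → ℝ) (s : S) (a : A) : ℝ :=
  (∑ s', P s a s' * (R s a s' + γ * V s')) - V s

/-- `ε_f^{π'} = max_s |E_{a∼π'(·|s), s'∼P}[δ_f(s,a,s')]|` where
`δ_f(s,a,s') = R(s,a,s') + γ f(s') - f(s)`. -/
def epsF [Fintype S] [Fintype A] (γ : ℝ) (P : S → A → S → ℝ) (R : S → A → S → ℝ)
    (f : S → ℝ) (pol' : S → A → ℝ) : ℝ :=
  ⨆ s, |∑ a, pol' s a * (∑ s', P s a s' * (R s a s' + γ * f s' - f s))|

/-- Surrogate `L_{π,f}(π') = E_{s∼d^π, a∼π, s'∼P}[(π'(a|s)/π(a|s) - 1) δ_f(s,a,s')]`. -/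
def Lsurr [Fintype S] [DecidableEq S] [Fintype A] (γ : ℝ) (P : S → A → S → ℝ)
    (R : S → A → S → ℝ) (μ : S → ℝ) (f : S → ℝ) (pol pol' : S → A → ℝ) : ℝ :=
  ∑ s, dFut γ P μ pol s * (∑ a, pol s a * (∑ s', P s a s' *
    ((pol' s a / pol s a - 1) * (R s a s' + γ * f s' - f s))))


section Aux

variable [Fintype S] [DecidableEq S] [Fintype A]

lemma Pmat_nonneg (P : S → A → S → ℝ) (pol : S → A → ℝ)
    (hP0 : ∀ s a s', 0 ≤ P s a s') (hpol0 : ∀ s a, 0 ≤ pol s a) (s' s : S) :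
    0 ≤ Pmat P pol s' s :=
  Finset.sum_nonneg fun a _ => mul_nonneg (hP0 _ _ _) (hpol0 _ _)

lemma Pmat_col_sum (P : S → A → S → ℝ) (pol : S → A → ℝ)
    (hP1 : ∀ s a, (∑ s', P s a s') = 1) (hpol1 : ∀ s, (∑ a, pol s a) = 1) (s : S) :
    ∑ s', Pmat P pol s' s = 1 := by
  unfold Pmat
  rw [Finset.sum_comm]
  simp only [← Finset.sum_mul, hP1, one_mul, hpol1]

lemma pow_mulVec_props (P : S → A → S → ℝ) (pol : S → A → ℝ)
    (hP0 : ∀ s a s', 0 ≤ P s a s') (hpol0 : ∀ s a, 0 ≤ pol s a)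
    (hP1 : ∀ s a, (∑ s', P s a s') = 1) (hpol1 : ∀ s, (∑ a, pol s a) = 1)
    (μ : S → ℝ) (hμ0 : ∀ s, 0 ≤ μ s) (hμ1 : (∑ s, μ s) = 1) (t : ℕ) :
    (∀ s, 0 ≤ (Pmat P pol ^ t *ᵥ μ) s) ∧ (∑ s, (Pmat P pol ^ t *ᵥ μ) s) = 1 := by
  induction t with
  | zero => simpa [Matrix.one_mulVec] using ⟨hμ0, hμ1⟩
  | succ n ih =>
    have h : Pmat P pol ^ (n + 1) *ᵥ μ = Pmat P pol *ᵥ (Pmat P pol ^ n *ᵥ μ) := by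
      rw [pow_succ', Matrix.mulVec_mulVec]
    constructor
    · intro s
      rw [h]
      exact Finset.sum_nonneg fun j _ =>
        mul_nonneg (Pmat_nonneg P pol hP0 hpol0 _ _) (ih.1 j)
    · rw [h]
      have h2 := ih.2
      simp only [Matrix.mulVec, dotProduct] at h2 ⊢
      rw [Finset.sum_comm]
      simp only [← Finset.sum_mul, Pmat_col_sum P pol hP1 hpol1, one_mul, h2]

end Aux

/-- For any `f : S → ℝ` and any policy `π`,
`J(π) = E_{s∼μ}[f(s)] + (1/(1-γ)) E_{s∼d^π, a∼π, s'∼P}[R(s,a,s') + γ f(s') - f(s)]`. -/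
theorem return_eq_baseline_plus_td
    [Fintype S] [DecidableEq S] [Nonempty S] [Fintype A] [Nonempty A]
    (γ : ℝ) (hγ0 : 0 ≤ γ) (hγ1 : γ < 1)
    (P : S → A → S → ℝ) (hP0 : ∀ s a s', 0 ≤ P s a s')
    (hP1 : ∀ s a, (∑ s', P s a s') = 1)
    (μ : S → ℝ) (hμ0 : ∀ s, 0 ≤ μ s) (hμ1 : (∑ s, μ s) = 1)
    (R : S → A → S → ℝ) (f : S → ℝ)
    (pol : S → A → ℝ)
    (hpol0 : ∀ s a, 0 ≤ pol s a) (hpol1 : ∀ s, (∑ a, pol s a) = 1) :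
    Jret γ P R μ pol
      = (∑ s, μ s * f s)
        + (1 / (1 - γ)) * ∑ s, dFut γ P μ pol s *
            (∑ a, pol s a * (∑ s', P s a s' * (R s a s' + γ * f s' - f s))) := by
  classical
  set M := Pmat P pol with hMdef
  set d := dFut γ P μ pol with hddef
  have hγne : (1 : ℝ) - γ ≠ 0 := by linarith
  have hprop := pow_mulVec_props P pol hP0 hpol0 hP1 hpol1 μ hμ0 hμ1
  -- summability of the defining series of `dFut`
  have hsum : ∀ s, Summable (fun t : ℕ => γ ^ t * ((M ^ t) *ᵥ μ) s) := by
    intro s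
    apply Summable.of_nonneg_of_le
      (fun t => mul_nonneg (pow_nonneg hγ0 t) ((hprop t).1 s))
      (fun t => ?_) (summable_geometric_of_lt_one hγ0 hγ1)
    have h1 : ((M ^ t) *ᵥ μ) s ≤ 1 := by
      rw [← (hprop t).2]
      exact Finset.single_le_sum (fun j _ => (hprop t).1 j) (Finset.mem_univ s)
    calc γ ^ t * ((M ^ t) *ᵥ μ) s ≤ γ ^ t * 1 :=
          mul_le_mul_of_nonneg_left h1 (pow_nonneg hγ0 t)
      _ = γ ^ t := mul_one _
  -- key recursion: d - γ M d = (1-γ) μ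
  have hkey : ∀ s, d s - γ * (M *ᵥ d) s = (1 - γ) * μ s := by
    intro s
    have hMd : (M *ᵥ d) s = (1 - γ) * ∑' t : ℕ, γ ^ t * ((M ^ (t + 1)) *ᵥ μ) s := by
      have h1 : (M *ᵥ d) s = ∑ j, M s j * ((1 - γ) * ∑' t : ℕ, γ ^ t * ((M ^ t) *ᵥ μ) j) := by
        simp [Matrix.mulVec, dotProduct, hddef, dFut, hMdef]
      rw [h1]
      have h2 : ∀ j : S, M s j * ((1 - γ) * ∑' t : ℕ, γ ^ t * ((M ^ t) *ᵥ μ) j)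
          = ∑' t : ℕ, (1 - γ) * (M s j * (γ ^ t * ((M ^ t) *ᵥ μ) j)) := by
        intro j
        rw [tsum_mul_left, tsum_mul_left]; ring
      simp only [h2]
      rw [← Summable.tsum_finsetSum (fun j _ => ((hsum j).mul_left _).mul_left _)]
      rw [← tsum_mul_left]
      apply tsum_congr
      intro t
      have : ∑ j, (1 - γ) * (M s j * (γ ^ t * ((M ^ t) *ᵥ μ) j))
          = (1 - γ) * (γ ^ t * ∑ j, M s j * ((M ^ t) *ᵥ μ) j) := by
        rw [Finset.mul_sum, Finset.mul_sum]
        apply Finset.sum_congr rfl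
        intro j _; ring
      rw [this]
      have hpow : ((M ^ (t + 1)) *ᵥ μ) s = ∑ j, M s j * ((M ^ t) *ᵥ μ) j := by
        rw [pow_succ', ← Matrix.mulVec_mulVec]
        simp [Matrix.mulVec, dotProduct]
      rw [hpow]
    have hd : d s = (1 - γ) * (μ s + ∑' t : ℕ, γ ^ (t + 1) * ((M ^ (t + 1)) *ᵥ μ) s) := by
      rw [hddef]
      show (1 - γ) * ∑' t : ℕ, γ ^ t * ((M ^ t) *ᵥ μ) s = _
      congr 1
      rw [Summable.tsum_eq_zero_add (hsum s)]
      simp [Matrix.one_mulVec]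
    rw [hMd, hd]
    have h3 : γ * ((1 - γ) * ∑' t : ℕ, γ ^ t * ((M ^ (t + 1)) *ᵥ μ) s)
        = (1 - γ) * ∑' t : ℕ, γ ^ (t + 1) * ((M ^ (t + 1)) *ᵥ μ) s := by
      rw [← tsum_mul_left, ← tsum_mul_left, ← tsum_mul_left]
      apply tsum_congr; intro t; ring
    rw [h3]; ring
  -- expand the inner expectation
  have hinner : ∀ s, (∑ a, pol s a * (∑ s', P s a s' * (R s a s' + γ * f s' - f s)))
      = (∑ a, pol s a * (∑ s', P s a s' * R s a s'))
        + γ * (∑ a, pol s a * (∑ s', P s a s' * f s')) - f s := by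
    intro s
    have h1 : ∀ a, (∑ s', P s a s' * (R s a s' + γ * f s' - f s))
        = (∑ s', P s a s' * R s a s') + γ * (∑ s', P s a s' * f s') - f s := by
      intro a
      have : ∀ s', P s a s' * (R s a s' + γ * f s' - f s)
          = P s a s' * R s a s' + γ * (P s a s' * f s') - f s * P s a s' := by
        intro s'; ring
      simp only [this, Finset.sum_sub_distrib, Finset.sum_add_distrib,
        ← Finset.mul_sum, hP1 s a, mul_one]
    simp only [h1]
    have : ∀ a, pol s a * ((∑ s', P s a s' * R s a s') + γ * (∑ s', P s a s' * f s') - f s)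
        = pol s a * (∑ s', P s a s' * R s a s')
          + γ * (pol s a * (∑ s', P s a s' * f s')) - f s * pol s a := by
      intro a; ring
    simp only [this, Finset.sum_sub_distrib, Finset.sum_add_distrib,
      ← Finset.mul_sum, hpol1 s, mul_one]
  -- translate the `f s'` term into a mulVec
  have hT : (∑ s, d s * (∑ a, pol s a * (∑ s', P s a s' * f s')))
      = ∑ s', (M *ᵥ d) s' * f s' := by
    have hL : ∀ s, d s * (∑ a, pol s a * (∑ s', P s a s' * f s'))
        = ∑ s', (∑ a, P s a s' * pol s a) * d s * f s' := by
      intro s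
      simp only [Finset.mul_sum, Finset.sum_mul]
      rw [Finset.sum_comm]
      apply Finset.sum_congr rfl; intro s' _
      apply Finset.sum_congr rfl; intro a _
      ring
    simp only [hL]
    rw [Finset.sum_comm]
    apply Finset.sum_congr rfl; intro s' _
    simp only [Matrix.mulVec, dotProduct, hMdef, Pmat, Finset.sum_mul]
  -- put everything together
  have hbig : (∑ s, d s * (∑ a, pol s a * (∑ s', P s a s' * (R s a s' + γ * f s' - f s))))
      = (∑ s, d s * (∑ a, pol s a * (∑ s', P s a s' * R s a s')))
        - (1 - γ) * ∑ s, μ s * f s := by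
    have h4 : ∀ s, d s * (∑ a, pol s a * (∑ s', P s a s' * (R s a s' + γ * f s' - f s)))
        = d s * (∑ a, pol s a * (∑ s', P s a s' * R s a s'))
          + γ * (d s * (∑ a, pol s a * (∑ s', P s a s' * f s'))) - d s * f s := by
      intro s; rw [hinner s]; ring
    simp only [h4, Finset.sum_sub_distrib, Finset.sum_add_distrib, ← Finset.mul_sum]
    rw [hT]
    have h5 : ∑ s, d s * f s = ∑ s', (γ * (M *ᵥ d) s' + (1 - γ) * μ s') * f s' := by
      apply Finset.sum_congr rfl; intro s _
      have := hkey s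
      have hds : d s = γ * (M *ᵥ d) s + (1 - γ) * μ s := by linarith
      rw [hds]
    rw [h5]
    have h6 : ∀ s', (γ * (M *ᵥ d) s' + (1 - γ) * μ s') * f s'
        = γ * ((M *ᵥ d) s' * f s') + (1 - γ) * (μ s' * f s') := by intro s'; ring
    simp only [h6, Finset.sum_add_distrib, ← Finset.mul_sum]
    ring
  rw [hbig, Jret]
  field_simp
  ring
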